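/- arXiv:2006.07464 — 2 statements merged into one kernel-verified Lean document; each statement's English description precedes it below -/
import Mathlib

section
/- Let K ≥ 1 and let X = {x_1, …, x_K} ⊂ ℝ be a set of K distinct real numbers, and identify each function f : X → ℝ with the vector (f(x_1), …, f(x_K)) ∈ ℝ^K. Let p_z be the uniform probability measure on the cube [0,1]^K ⊂ ℝ^K. For every ε > 0, every δ ∈ (0,1), every B > 0, and every Borel probability measure μ on ℝ^K satisfying μ({v ∈ ℝ^K : max_{1≤i≤K} |v_i| ≤ B}) = 1, there exist a Borel measurable map H : ℝ^K → ℝ^K whose pushforward of p_z equals μ, and a ReLU network N : ℝ^{1+K} → ℝ, such that p_z({z ∈ ℝ^K : max_{1≤i≤K} |N(x_i, z) − H(z)_i| ≤ ε}) ≥ 1 − δ. -/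
open MeasureTheory

/-- The ReLU activation. -/
noncomputable def relu (t : ℝ) : ℝ := max t 0

/-- `IsReLUNet N` says that `N : ℝ^n → ℝ^m` is expressible as
`A_L ∘ ρ ∘ A_{L-1} ∘ ⋯ ∘ ρ ∘ A_1` for some `L ≥ 1`, where each `A_i` is an affine map
and `ρ` applies `t ↦ max (t, 0)` coordinatewise. -/
inductive IsReLUNet : {n m : ℕ} → ((Fin n → ℝ) → (Fin m → ℝ)) → Prop
  | affine {n m : ℕ} (A : Matrix (Fin m) (Fin n) ℝ) (b : Fin m → ℝ) :
      IsReLUNet (fun x => A.mulVec x + b)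
  | step {n k m : ℕ} (A : Matrix (Fin m) (Fin k) ℝ) (b : Fin m → ℝ)
      {f : (Fin n → ℝ) → (Fin k → ℝ)} :
      IsReLUNet f → IsReLUNet (fun x => A.mulVec (fun i => relu (f x i)) + b)

namespace ReLUAux

open Set Filter

/-! ### relu basics -/

lemma relu_of_nonneg {t : ℝ} (h : 0 ≤ t) : relu t = t := max_eq_left h

lemma relu_of_nonpos {t : ℝ} (h : t ≤ 0) : relu t = 0 := max_eq_right h

lemma relu_nonneg (t : ℝ) : 0 ≤ relu t := le_max_right _ _

lemma relu_add_relu_neg (t : ℝ) : relu t + relu (-t) = |t| := by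
  rcases le_total t 0 with h | h
  · rw [relu_of_nonpos h, relu_of_nonneg (by linarith), abs_of_nonpos h]; ring
  · rw [relu_of_nonneg h, relu_of_nonpos (by linarith), abs_of_nonneg h]; ring

lemma relu_sub_relu_neg (t : ℝ) : relu t - relu (-t) = t := by
  rcases le_total t 0 with h | h
  · rw [relu_of_nonpos h, relu_of_nonneg (by linarith)]; ring
  · rw [relu_of_nonneg h, relu_of_nonpos (by linarith)]; ring

lemma relu_le_of_le {t c : ℝ} (h : t ≤ c) (hc : 0 ≤ c) : relu t ≤ c := max_le h hc

/-! ### single-entry-per-row matrices -/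

noncomputable def sMat {p q : ℕ} (col : Fin p → Fin q) (c : Fin p → ℝ) :
    Matrix (Fin p) (Fin q) ℝ :=
  Matrix.of fun i j => if j = col i then c i else 0

lemma sMat_mulVec {p q : ℕ} (col : Fin p → Fin q) (c : Fin p → ℝ) (v : Fin q → ℝ) :
    (sMat col c).mulVec v = fun i => c i * v (col i) := by
  funext i
  simp only [Matrix.mulVec, dotProduct, sMat, Matrix.of_apply, ite_mul, zero_mul]
  rw [Finset.sum_ite_eq' Finset.univ (col i) (fun j => c i * v j)]
  simp

/-! ### the network -/

section Net

variable (K nn : ℕ) (xs : Fin K → ℝ) (d M : ℝ) (cval : Fin K → Fin (nn + 1) → ℝ)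
  (i0 : Fin K)

noncomputable def grid (j : Fin (nn + 1)) : ℝ := (j : ℝ) / nn

noncomputable def hat (j : Fin (nn + 1)) (t : ℝ) : ℝ := relu (1 - nn * |t - grid nn j|)

noncomputable def pwl (c : Fin (nn + 1) → ℝ) (t : ℝ) : ℝ := ∑ j, c j * hat nn j t

noncomputable def phi (d xi t : ℝ) : ℝ := relu (1 - |t - xi| / d)

/-- indices into layer-1 output -/
def idxP (j : Fin (nn + 1)) : Fin ((nn + 1) + ((nn + 1) + (K + K))) :=
  Fin.castAdd _ j
def idxQ (j : Fin (nn + 1)) : Fin ((nn + 1) + ((nn + 1) + (K + K))) :=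
  Fin.natAdd _ (Fin.castAdd _ j)
def idxR (i : Fin K) : Fin ((nn + 1) + ((nn + 1) + (K + K))) :=
  Fin.natAdd _ (Fin.natAdd _ (Fin.castAdd _ i))
def idxS (i : Fin K) : Fin ((nn + 1) + ((nn + 1) + (K + K))) :=
  Fin.natAdd _ (Fin.natAdd _ (Fin.natAdd _ i))

noncomputable def mA1 : Matrix (Fin ((nn + 1) + ((nn + 1) + (K + K)))) (Fin (K + 1)) ℝ :=
  sMat
    (Fin.addCases (fun _ => i0.succ)
      (Fin.addCases (fun _ => i0.succ) (Fin.addCases (fun _ => 0) (fun _ => 0))))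
    (Fin.addCases (fun _ => 1)
      (Fin.addCases (fun _ => -1) (Fin.addCases (fun _ => 1) (fun _ => -1))))

noncomputable def vb1 : Fin ((nn + 1) + ((nn + 1) + (K + K))) → ℝ :=
  Fin.addCases (fun j => -grid nn j)
    (Fin.addCases (fun j => grid nn j) (Fin.addCases (fun i => -xs i) (fun i => xs i)))

noncomputable def L1 (u : Fin (K + 1) → ℝ) : Fin ((nn + 1) + ((nn + 1) + (K + K))) → ℝ :=
  (mA1 K nn i0).mulVec u + vb1 K nn xs

noncomputable def mA2 :
    Matrix (Fin ((nn + 1) + K)) (Fin ((nn + 1) + ((nn + 1) + (K + K)))) ℝ :=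
  sMat (Fin.addCases (fun j => idxP K nn j) (fun i => idxR K nn i))
      (Fin.addCases (fun _ => -(nn : ℝ)) (fun _ => -(1 / d)))
    + sMat (Fin.addCases (fun j => idxQ K nn j) (fun i => idxS K nn i))
      (Fin.addCases (fun _ => -(nn : ℝ)) (fun _ => -(1 / d)))

noncomputable def L2 (u : Fin (K + 1) → ℝ) : Fin ((nn + 1) + K) → ℝ :=
  (mA2 K nn d).mulVec (fun c => relu (L1 K nn xs i0 u c)) + fun _ => 1

noncomputable def mA3 : Matrix (Fin (K + K)) (Fin ((nn + 1) + K)) ℝ :=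
  Matrix.of fun r =>
    Fin.addCases
      (fun j => (Fin.addCases (fun _ => (1 : ℝ)) (fun _ => -1) r) *
        cval (Fin.addCases id id r) j)
      (fun i => if i = Fin.addCases id id r then M else 0)

noncomputable def L3 (u : Fin (K + 1) → ℝ) : Fin (K + K) → ℝ :=
  (mA3 K nn M cval).mulVec (fun c => relu (L2 K nn xs d i0 u c)) + fun _ => -M

noncomputable def mA4 : Matrix (Fin 1) (Fin (K + K)) ℝ :=
  Matrix.of fun _ => Fin.addCases (fun _ => (1 : ℝ)) (fun _ => -1)

noncomputable def net (u : Fin (K + 1) → ℝ) : Fin 1 → ℝ :=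
  (mA4 K).mulVec (fun r => relu (L3 K nn xs d M cval i0 u r)) + 0

lemma isReLUNet_net : IsReLUNet (net K nn xs d M cval i0) := by
  have h1 : IsReLUNet (L1 K nn xs i0) := IsReLUNet.affine _ _
  have h2 : IsReLUNet (L2 K nn xs d i0) := IsReLUNet.step _ _ h1
  have h3 : IsReLUNet (L3 K nn xs d M cval i0) := IsReLUNet.step _ _ h2
  exact IsReLUNet.step _ _ h3

/-! ### evaluation of the network -/

lemma L1_P (u : Fin (K + 1) → ℝ) (j : Fin (nn + 1)) :
    L1 K nn xs i0 u (idxP K nn j) = u i0.succ - grid nn j := by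
  simp [L1, mA1, vb1, idxP, sMat_mulVec, Fin.addCases_left, sub_eq_add_neg]

lemma L1_Q (u : Fin (K + 1) → ℝ) (j : Fin (nn + 1)) :
    L1 K nn xs i0 u (idxQ K nn j) = grid nn j - u i0.succ := by
  simp [L1, mA1, vb1, idxQ, sMat_mulVec, Fin.addCases_left, Fin.addCases_right]
  ring

lemma L1_R (u : Fin (K + 1) → ℝ) (i : Fin K) :
    L1 K nn xs i0 u (idxR K nn i) = u 0 - xs i := by
  simp [L1, mA1, vb1, idxR, sMat_mulVec, Fin.addCases_left, Fin.addCases_right,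
    sub_eq_add_neg]

lemma L1_S (u : Fin (K + 1) → ℝ) (i : Fin K) :
    L1 K nn xs i0 u (idxS K nn i) = xs i - u 0 := by
  simp only [L1, mA1, vb1, idxS, sMat_mulVec, Pi.add_apply, Fin.addCases_right]
  ring

lemma relu_L2_left (u : Fin (K + 1) → ℝ) (j : Fin (nn + 1)) :
    relu (L2 K nn xs d i0 u (Fin.castAdd K j)) = hat nn j (u i0.succ) := by
  have : L2 K nn xs d i0 u (Fin.castAdd K j)
      = 1 - nn * |u i0.succ - grid nn j| := by
    simp only [L2, mA2, Matrix.add_mulVec, sMat_mulVec, Pi.add_apply,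
      Fin.addCases_left, L1_P, L1_Q]
    rw [show grid nn j - u i0.succ = -(u i0.succ - grid nn j) by ring,
      show -(nn : ℝ) * relu (u i0.succ - grid nn j) +
          -(nn : ℝ) * relu (-(u i0.succ - grid nn j)) + 1
        = 1 - nn * (relu (u i0.succ - grid nn j) + relu (-(u i0.succ - grid nn j))) by ring,
      relu_add_relu_neg]
  rw [this, hat]

lemma relu_L2_right (u : Fin (K + 1) → ℝ) (i : Fin K) :
    relu (L2 K nn xs d i0 u (Fin.natAdd (nn + 1) i)) = phi d (xs i) (u 0) := by
  have : L2 K nn xs d i0 u (Fin.natAdd (nn + 1) i)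
      = 1 - |u 0 - xs i| / d := by
    simp only [L2, mA2, Matrix.add_mulVec, sMat_mulVec, Pi.add_apply,
      Fin.addCases_right, L1_R, L1_S]
    rw [show xs i - u 0 = -(u 0 - xs i) by ring,
      show -(1 / d) * relu (u 0 - xs i) + -(1 / d) * relu (-(u 0 - xs i)) + 1
        = 1 - (relu (u 0 - xs i) + relu (-(u 0 - xs i))) / d by ring,
      relu_add_relu_neg]
  rw [this, phi]

lemma L3_left (u : Fin (K + 1) → ℝ) (i : Fin K) :
    L3 K nn xs d M cval i0 u (Fin.castAdd K i)
      = pwl nn (cval i) (u i0.succ) + M * phi d (xs i) (u 0) - M := by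
  simp only [L3, Pi.add_apply, Matrix.mulVec, dotProduct]
  rw [Fin.sum_univ_add]
  simp only [mA3, Matrix.of_apply, Fin.addCases_left, Fin.addCases_right, id_eq,
    relu_L2_left, relu_L2_right, one_mul, ite_mul, zero_mul]
  rw [Finset.sum_ite_eq' Finset.univ i
    (fun i' => M * phi d (xs i') (u 0))]
  simp only [Finset.mem_univ, if_true, pwl]
  ring

lemma L3_right (u : Fin (K + 1) → ℝ) (i : Fin K) :
    L3 K nn xs d M cval i0 u (Fin.natAdd K i)
      = -pwl nn (cval i) (u i0.succ) + M * phi d (xs i) (u 0) - M := by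
  simp only [L3, Pi.add_apply, Matrix.mulVec, dotProduct]
  rw [Fin.sum_univ_add]
  simp only [mA3, Matrix.of_apply, Fin.addCases_left, Fin.addCases_right, id_eq,
    relu_L2_left, relu_L2_right, neg_one_mul, neg_mul, ite_mul, zero_mul]
  rw [Finset.sum_ite_eq' Finset.univ i
    (fun i' => M * phi d (xs i') (u 0))]
  simp only [Finset.mem_univ, if_true, pwl, Finset.sum_neg_distrib]
  ring

lemma net_eval (u : Fin (K + 1) → ℝ) :
    net K nn xs d M cval i0 u 0
      = ∑ i : Fin K,
          (relu (pwl nn (cval i) (u i0.succ) + M * phi d (xs i) (u 0) - M)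
            - relu (-pwl nn (cval i) (u i0.succ) + M * phi d (xs i) (u 0) - M)) := by
  simp only [net, Pi.add_apply, Matrix.mulVec, dotProduct, Pi.zero_apply, add_zero]
  rw [Fin.sum_univ_add]
  simp only [mA4, Matrix.of_apply, Fin.addCases_left, Fin.addCases_right, one_mul,
    neg_one_mul, L3_left, L3_right]
  rw [← Finset.sum_add_distrib]
  exact Finset.sum_congr rfl (fun i _ => by ring)

lemma phi_self {d : ℝ} (hd : 0 < d) (xi : ℝ) : phi d xi xi = 1 := by
  simp [phi, relu_of_nonneg]

lemma phi_other {d a t : ℝ} (hd : 0 < d) (h : d ≤ |t - a|) : phi d a t = 0 := by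
  apply relu_of_nonpos
  have : 1 ≤ |t - a| / d := (one_le_div hd).2 h
  linarith

lemma net_at_node (hd : 0 < d) (hsep : ∀ i k : Fin K, i ≠ k → d ≤ |xs i - xs k|)
    (hMb : ∀ (i : Fin K) (t : ℝ), |pwl nn (cval i) t| ≤ M - 1)
    (k : Fin K) (z : Fin K → ℝ) :
    net K nn xs d M cval i0 (Fin.cons (xs k) z) 0 = pwl nn (cval k) (z i0) := by
  rw [net_eval]
  simp only [Fin.cons_succ, Fin.cons_zero]
  have hterm : ∀ i : Fin K,
      relu (pwl nn (cval i) (z i0) + M * phi d (xs i) (xs k) - M)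
          - relu (-pwl nn (cval i) (z i0) + M * phi d (xs i) (xs k) - M)
        = if i = k then pwl nn (cval k) (z i0) else 0 := by
    intro i
    by_cases hik : i = k
    · subst hik
      rw [if_pos rfl, phi_self hd]
      rw [show pwl nn (cval i) (z i0) + M * 1 - M = pwl nn (cval i) (z i0) by ring,
        show -pwl nn (cval i) (z i0) + M * 1 - M = -(pwl nn (cval i) (z i0)) by ring]
      exact relu_sub_relu_neg _
    · rw [if_neg hik, phi_other hd ?_]
      · have hb := hMb i (z i0)
        have h1 : pwl nn (cval i) (z i0) + M * 0 - M ≤ 0 := by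
          have := abs_le.1 hb
          linarith [this.2]
        have h2 : -pwl nn (cval i) (z i0) + M * 0 - M ≤ 0 := by
          have := abs_le.1 hb
          linarith [this.1]
        rw [relu_of_nonpos h1, relu_of_nonpos h2, sub_zero]
      · exact hsep k i (fun h => hik h.symm)
  rw [Finset.sum_congr rfl (fun i _ => hterm i)]
  rw [Finset.sum_ite_eq' Finset.univ k (fun _ => pwl nn (cval k) (z i0))]
  simp

end Net

/-! ### hat function facts -/

lemma hat_nonneg (nn : ℕ) (j : Fin (nn + 1)) (t : ℝ) : 0 ≤ hat nn j t := relu_nonneg _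

lemma hat_le_one (nn : ℕ) (j : Fin (nn + 1)) (t : ℝ) : hat nn j t ≤ 1 := by
  apply relu_le_of_le _ zero_le_one
  have : 0 ≤ (nn : ℝ) * |t - grid nn j| := by positivity
  linarith

lemma hat_pos_close {nn : ℕ} (hnn : 1 ≤ nn) {j : Fin (nn + 1)} {t : ℝ}
    (h : 0 < hat nn j t) : |t - grid nn j| ≤ 1 / nn := by
  by_contra hc
  push_neg at hc
  have hn : (0:ℝ) < nn := by exact_mod_cast hnn
  have : (nn:ℝ) * |t - grid nn j| > 1 := by
    calc (1:ℝ) = nn * (1 / nn) := by field_simp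
    _ < nn * |t - grid nn j| := by apply mul_lt_mul_of_pos_left hc hn
  rw [hat, relu_of_nonpos (by linarith)] at h
  exact lt_irrefl _ h

lemma hat_sum_one {nn : ℕ} (hnn : 1 ≤ nn) {t : ℝ} (ht : t ∈ Icc (0:ℝ) 1) :
    ∑ j : Fin (nn + 1), hat nn j t = 1 := by
  have hn0 : (0:ℝ) < nn := by exact_mod_cast hnn
  obtain ⟨k, hk1, hk2, hk3⟩ :
      ∃ k : ℕ, (k:ℝ) ≤ t * nn ∧ t * nn ≤ k + 1 ∧ k + 1 ≤ nn := by
    by_cases hc : ⌊t * nn⌋₊ < nn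
    · exact ⟨⌊t * nn⌋₊, Nat.floor_le (by have := ht.1; positivity),
        (Nat.lt_floor_add_one _).le, hc⟩
    · push_neg at hc
      have h1 : (nn:ℝ) ≤ t * nn := by
        have := (Nat.le_floor_iff (by have := ht.1; positivity)).1 hc
        exact_mod_cast this
      have h2 : t * nn ≤ nn := by
        nlinarith [ht.2, hn0]
      refine ⟨nn - 1, ?_, ?_, by omega⟩
      · rw [Nat.cast_sub hnn]
        push_cast
        linarith
      · rw [Nat.cast_sub hnn]
        push_cast
        linarith
  set j₀ : Fin (nn + 1) := ⟨k, by omega⟩ with hj₀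
  set j₁ : Fin (nn + 1) := ⟨k + 1, by omega⟩ with hj₁
  have hval : ∀ j : Fin (nn + 1), hat nn j t = relu (1 - |t * nn - j|) := by
    intro j
    rw [hat, grid]
    congr 1
    rw [show t - (j:ℝ)/nn = (t * nn - j)/nn by field_simp, abs_div,
      abs_of_pos hn0]
    field_simp
  have hzero : ∀ j : Fin (nn + 1), j ∉ ({j₀, j₁} : Finset (Fin (nn + 1))) →
      hat nn j t = 0 := by
    intro j hj
    simp only [Finset.mem_insert, Finset.mem_singleton] at hj
    push_neg at hj
    have hv0 : j.val ≠ k := fun h => hj.1 (Fin.ext h)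
    have hv1 : j.val ≠ k + 1 := fun h => hj.2 (Fin.ext h)
    rw [hval]
    apply relu_of_nonpos
    rcases lt_or_gt_of_ne hv0 with h | h
    · have : (j:ℝ) + 1 ≤ k := by exact_mod_cast h
      have habs : t * nn - j ≤ |t * nn - j| := le_abs_self _
      linarith
    · have : (k:ℝ) + 2 ≤ j := by exact_mod_cast (by omega : k + 2 ≤ j.val)
      have habs : -(t * nn - j) ≤ |t * nn - j| := neg_le_abs _
      linarith
  rw [← Finset.sum_subset (Finset.subset_univ ({j₀, j₁} : Finset (Fin (nn + 1))))
    (fun j _ hj => hzero j hj)]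
  have hne : j₀ ≠ j₁ := by
    simp [hj₀, hj₁, Fin.ext_iff]
  rw [Finset.sum_pair hne, hval, hval]
  have hc0 : ((j₀ : Fin (nn+1)) : ℝ) = k := by simp [hj₀]
  have hc1 : ((j₁ : Fin (nn+1)) : ℝ) = k + 1 := by
    rw [hj₁]
    push_cast
    ring
  rw [hc0, hc1]
  rw [abs_of_nonneg (by linarith), abs_of_nonpos (by linarith)]
  rw [relu_of_nonneg (by linarith), relu_of_nonneg (by linarith)]
  ring

lemma pwl_approx {nn : ℕ} (hnn : 1 ≤ nn) (c : Fin (nn + 1) → ℝ) {t y ε' : ℝ}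
    (hε' : 0 ≤ ε') (ht : t ∈ Icc (0:ℝ) 1)
    (hmod : ∀ j : Fin (nn + 1), |t - grid nn j| ≤ 1 / nn → |c j - y| ≤ ε') :
    |pwl nn c t - y| ≤ ε' := by
  have hsum := hat_sum_one hnn ht
  have hrepr : pwl nn c t - y = ∑ j, (c j - y) * hat nn j t := by
    rw [show ∑ j, (c j - y) * hat nn j t
        = ∑ j, c j * hat nn j t - ∑ j, y * hat nn j t from by
      rw [← Finset.sum_sub_distrib]; exact Finset.sum_congr rfl fun _ _ => by ring]
    rw [← Finset.mul_sum, hsum, mul_one, pwl]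
  rw [hrepr]
  refine (Finset.abs_sum_le_sum_abs _ _).trans ?_
  have hterm : ∀ j : Fin (nn + 1), |(c j - y) * hat nn j t| ≤ ε' * hat nn j t := by
    intro j
    rw [abs_mul, abs_of_nonneg (hat_nonneg nn j t)]
    by_cases h0 : hat nn j t = 0
    · simp [h0]
    · have hpos : 0 < hat nn j t := lt_of_le_of_ne (hat_nonneg nn j t) (Ne.symm h0)
      exact mul_le_mul_of_nonneg_right (hmod j (hat_pos_close hnn hpos))
        (hat_nonneg nn j t)
  refine (Finset.sum_le_sum fun j _ => hterm j).trans ?_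
  rw [← Finset.mul_sum, hsum, mul_one]

lemma pwl_bound (nn : ℕ) (c : Fin (nn + 1) → ℝ) (t : ℝ) :
    |pwl nn c t| ≤ ∑ j, |c j| := by
  refine (Finset.abs_sum_le_sum_abs _ _).trans ?_
  apply Finset.sum_le_sum
  intro j _
  rw [abs_mul]
  calc |c j| * |hat nn j t| ≤ |c j| * 1 := by
        apply mul_le_mul_of_nonneg_left _ (abs_nonneg _)
        rw [abs_of_nonneg (hat_nonneg nn j t)]
        exact hat_le_one nn j t
  _ = |c j| := mul_one _

/-! ### measure-theoretic ingredients -/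

instance : IsProbabilityMeasure (volume.restrict (Icc (0:ℝ) 1)) := by
  constructor
  rw [Measure.restrict_apply_univ, Real.volume_Icc]
  norm_num

lemma map_eval_pi (K : ℕ) (i0 : Fin K) :
    Measure.map (fun z : Fin K → ℝ => z i0)
        (Measure.pi fun _ : Fin K => volume.restrict (Icc (0:ℝ) 1))
      = volume.restrict (Icc (0:ℝ) 1) := by
  refine Measure.ext fun S hS => ?_
  rw [Measure.map_apply (measurable_pi_apply i0) hS]
  have hpre : (fun z : Fin K → ℝ => z i0) ⁻¹' S
      = Set.pi Set.univ (fun i => if i = i0 then S else univ) := by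
    ext z
    simp only [Set.mem_preimage, Set.mem_univ_pi]
    constructor
    · intro hz i
      by_cases h : i = i0
      · subst h; simpa using hz
      · simp [h]
    · intro hz
      have := hz i0
      simpa using this
  rw [hpre, Measure.pi_pi]
  have : ∀ i : Fin K,
      (volume.restrict (Icc (0:ℝ) 1)) (if i = i0 then S else univ)
        = if i = i0 then (volume.restrict (Icc (0:ℝ) 1)) S else 1 := by
    intro i
    by_cases h : i = i0 <;> simp [h]
  rw [Finset.prod_congr rfl (fun i _ => this i),
    Finset.prod_ite_eq' Finset.univ i0
      (fun _ => (volume.restrict (Icc (0:ℝ) 1)) S)]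
  simp

lemma exists_transport (ν : Measure ℝ) [IsProbabilityMeasure ν] :
    ∃ q : ℝ → ℝ, Measurable q ∧ Measure.map q (volume.restrict (Icc (0:ℝ) 1)) = ν := by
  classical
  set F : StieltjesFunction ℝ := ProbabilityTheory.cdf ν with hFdef
  set Q : ℝ → ℝ := fun u => sInf {y | u ≤ F y} with hQdef
  have hF0 : ∀ y, 0 ≤ F y := ProbabilityTheory.cdf_nonneg ν
  have hF1 : ∀ y, F y ≤ 1 := ProbabilityTheory.cdf_le_one ν
  have hne : ∀ u : ℝ, u < 1 → {y | u ≤ F y}.Nonempty := by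
    intro u hu
    obtain ⟨y, hy⟩ :=
      (Filter.Tendsto.eventually_const_le hu (ProbabilityTheory.tendsto_cdf_atTop ν)).exists
    exact ⟨y, hy⟩
  have hbdd : ∀ u : ℝ, 0 < u → BddBelow {y | u ≤ F y} := by
    intro u hu
    obtain ⟨y0, hy0⟩ :=
      (Filter.Tendsto.eventually_lt_const hu (ProbabilityTheory.tendsto_cdf_atBot ν)).exists
    refine ⟨y0, fun y hy => ?_⟩
    by_contra hc
    push_neg at hc
    exact absurd (le_trans hy (F.mono hc.le)) (not_le.2 hy0)
  have galois : ∀ u : ℝ, 0 < u → u < 1 → ∀ y, Q u ≤ y ↔ u ≤ F y := by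
    intro u hu0 hu1 y
    constructor
    · intro h
      have hev : ∀ᶠ y' in nhdsWithin y (Ioi y), u ≤ F y' := by
        filter_upwards [self_mem_nhdsWithin] with y' hy'
        obtain ⟨y'', hy'', hlt⟩ := exists_lt_of_csInf_lt (hne u hu1) (lt_of_le_of_lt h hy')
        exact le_trans hy'' (F.mono hlt.le)
      have htd : Filter.Tendsto F (nhdsWithin y (Ioi y)) (nhds (F y)) :=
        (F.right_continuous y).mono_left (nhdsWithin_mono y Ioi_subset_Ici_self)
      exact ge_of_tendsto htd hev
    · intro h
      exact csInf_le (hbdd u hu0) h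
  have hQ0 : ∀ u : ℝ, u ≤ 0 → Q u = 0 := by
    intro u hu
    have hset : {y | u ≤ F y} = univ := by
      ext y; simp only [Set.mem_setOf_eq, Set.mem_univ, iff_true]
      exact hu.trans (hF0 y)
    have hnb : ¬BddBelow (univ : Set ℝ) := by
      rintro ⟨b, hb⟩
      have := hb (Set.mem_univ (b - 1))
      linarith
    rw [hQdef]
    simp only
    rw [hset, csInf_of_not_bddBelow hnb, Real.sInf_empty]
  have hQ1 : ∀ u : ℝ, 1 < u → Q u = 0 := by
    intro u hu
    have hset : {y | u ≤ F y} = (∅ : Set ℝ) := by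
      ext y; simp only [Set.mem_setOf_eq, Set.mem_empty_iff_false, iff_false, not_le]
      exact lt_of_le_of_lt (hF1 y) hu
    rw [hQdef]
    simp only
    rw [hset, Real.sInf_empty]
  have hQmeas : Measurable Q := by
    apply measurable_of_Iic
    intro y
    have hdec : Q ⁻¹' Iic y =
        (Ioo (0:ℝ) 1 ∩ Iic (F y)) ∪
          ((Q ⁻¹' Iic y ∩ Iic 0) ∪
            ((Q ⁻¹' Iic y ∩ {(1:ℝ)}) ∪ (Q ⁻¹' Iic y ∩ Ioi 1))) := by
      ext u
      simp only [Set.mem_union, Set.mem_inter_iff, Set.mem_preimage, Set.mem_Iic,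
        Set.mem_Ioo, Set.mem_Ioi, Set.mem_singleton_iff]
      constructor
      · intro hu
        rcases le_or_gt u 0 with h0 | h0
        · exact Or.inr (Or.inl ⟨hu, h0⟩)
        rcases lt_trichotomy u 1 with h1 | h1 | h1
        · exact Or.inl ⟨⟨h0, h1⟩, (galois u h0 h1 y).1 hu⟩
        · exact Or.inr (Or.inr (Or.inl ⟨hu, h1⟩))
        · exact Or.inr (Or.inr (Or.inr ⟨hu, h1⟩))
      · rintro (⟨⟨h0, h1⟩, h⟩ | ⟨h, _⟩ | ⟨h, _⟩ | ⟨h, _⟩)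
        · exact (galois u h0 h1 y).2 h
        all_goals exact h
    rw [hdec]
    have hm1 : MeasurableSet (Ioo (0:ℝ) 1 ∩ Iic (F y)) :=
      measurableSet_Ioo.inter measurableSet_Iic
    have hm2 : MeasurableSet (Q ⁻¹' Iic y ∩ Iic (0:ℝ)) := by
      by_cases hy : (0:ℝ) ≤ y
      · have : Q ⁻¹' Iic y ∩ Iic (0:ℝ) = Iic 0 := by
          ext u
          simp only [Set.mem_inter_iff, Set.mem_preimage, Set.mem_Iic, and_iff_right_iff_imp]
          intro hu
          rw [hQ0 u hu]
          exact hy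
        rw [this]; exact measurableSet_Iic
      · have : Q ⁻¹' Iic y ∩ Iic (0:ℝ) = ∅ := by
          ext u
          simp only [Set.mem_inter_iff, Set.mem_preimage, Set.mem_Iic,
            Set.mem_empty_iff_false, iff_false, not_and]
          intro hu hcontra
          rw [hQ0 u hcontra] at hu
          exact hy hu
        rw [this]; exact MeasurableSet.empty
    have hm3 : MeasurableSet (Q ⁻¹' Iic y ∩ {(1:ℝ)}) := by
      by_cases hq : Q 1 ≤ y
      · have : Q ⁻¹' Iic y ∩ {(1:ℝ)} = {(1:ℝ)} := by
          ext u
          simp only [Set.mem_inter_iff, Set.mem_preimage, Set.mem_Iic,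
            Set.mem_singleton_iff, and_iff_right_iff_imp]
          rintro rfl
          exact hq
        rw [this]; exact measurableSet_singleton 1
      · have : Q ⁻¹' Iic y ∩ {(1:ℝ)} = ∅ := by
          ext u
          simp only [Set.mem_inter_iff, Set.mem_preimage, Set.mem_Iic,
            Set.mem_singleton_iff, Set.mem_empty_iff_false, iff_false, not_and]
          rintro hu rfl
          exact hq hu
        rw [this]; exact MeasurableSet.empty
    have hm4 : MeasurableSet (Q ⁻¹' Iic y ∩ Ioi (1:ℝ)) := by
      by_cases hy : (0:ℝ) ≤ y
      · have : Q ⁻¹' Iic y ∩ Ioi (1:ℝ) = Ioi 1 := by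
          ext u
          simp only [Set.mem_inter_iff, Set.mem_preimage, Set.mem_Iic, Set.mem_Ioi,
            and_iff_right_iff_imp]
          intro hu
          rw [hQ1 u hu]
          exact hy
        rw [this]; exact measurableSet_Ioi
      · have : Q ⁻¹' Iic y ∩ Ioi (1:ℝ) = ∅ := by
          ext u
          simp only [Set.mem_inter_iff, Set.mem_preimage, Set.mem_Iic, Set.mem_Ioi,
            Set.mem_empty_iff_false, iff_false, not_and]
          intro hu hcontra
          rw [hQ1 u hcontra] at hu
          exact hy hu
        rw [this]; exact MeasurableSet.empty
    exact hm1.union (hm2.union (hm3.union hm4))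
  refine ⟨Q, hQmeas, ?_⟩
  haveI : IsProbabilityMeasure (Measure.map Q (volume.restrict (Icc (0:ℝ) 1))) :=
    Measure.isProbabilityMeasure_map hQmeas.aemeasurable
  refine Measure.ext_of_Iic _ _ fun y => ?_
  rw [Measure.map_apply hQmeas measurableSet_Iic,
    Measure.restrict_apply (hQmeas measurableSet_Iic)]
  have hν : ν (Iic y) = ENNReal.ofReal (F y) := (ProbabilityTheory.ofReal_cdf ν y).symm
  rw [hν]
  have hnull : volume ((Q ⁻¹' Iic y) ∩ Icc 0 1) = volume ((Q ⁻¹' Iic y) ∩ Ioo 0 1) := by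
    apply le_antisymm
    · calc volume ((Q ⁻¹' Iic y) ∩ Icc 0 1)
          ≤ volume (((Q ⁻¹' Iic y) ∩ Ioo 0 1) ∪ {0, 1}) := by
            apply measure_mono
            rintro u ⟨hu1, hu2⟩
            rcases eq_or_lt_of_le hu2.1 with h0 | h0
            · exact Or.inr (Or.inl h0.symm)
            rcases eq_or_lt_of_le hu2.2 with h1 | h1
            · exact Or.inr (Or.inr h1)
            · exact Or.inl ⟨hu1, h0, h1⟩
      _ ≤ volume ((Q ⁻¹' Iic y) ∩ Ioo 0 1) + volume ({0, 1} : Set ℝ) :=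
            measure_union_le _ _
      _ = volume ((Q ⁻¹' Iic y) ∩ Ioo 0 1) := by
            rw [Set.Countable.measure_zero
              (Set.Countable.insert 0 (Set.countable_singleton 1)) volume, add_zero]
    · exact measure_mono (Set.inter_subset_inter_right _ Set.Ioo_subset_Icc_self)
  rw [hnull]
  have hset : (Q ⁻¹' Iic y) ∩ Ioo 0 1 = Iic (F y) ∩ Ioo 0 1 := by
    ext u
    simp only [Set.mem_inter_iff, Set.mem_preimage, Set.mem_Iic, Set.mem_Ioo]
    constructor
    · rintro ⟨h, h2⟩
      exact ⟨(galois u h2.1 h2.2 y).1 h, h2⟩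
    · rintro ⟨h, h2⟩
      exact ⟨(galois u h2.1 h2.2 y).2 h, h2⟩
  rw [hset]
  rcases lt_or_ge (F y) 1 with hFy | hFy
  · have : Iic (F y) ∩ Ioo 0 1 = Ioc 0 (F y) := by
      ext u
      simp only [Set.mem_inter_iff, Set.mem_Iic, Set.mem_Ioo, Set.mem_Ioc]
      constructor
      · rintro ⟨h1, h2, h3⟩
        exact ⟨h2, h1⟩
      · rintro ⟨h1, h2⟩
        exact ⟨h2, h1, lt_of_le_of_lt h2 hFy⟩
    rw [this, Real.volume_Ioc, sub_zero]
  · have heq : F y = 1 := le_antisymm (hF1 y) hFy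
    have : Iic (F y) ∩ Ioo 0 1 = Ioo 0 1 := by
      rw [Set.inter_eq_self_of_subset_right]
      intro u hu
      exact le_trans hu.2.le hFy
    rw [this, Real.volume_Ioo, heq]
    norm_num

lemma exists_transport_pi (K : ℕ) (hK : 1 ≤ K) (μ : Measure (Fin K → ℝ))
    [IsProbabilityMeasure μ] :
    ∃ h : ℝ → (Fin K → ℝ), Measurable h ∧
      Measure.map h (volume.restrict (Icc (0:ℝ) 1)) = μ := by
  have hinj : Function.Injective (fun r : ℝ => (fun _ : Fin K => r)) := by
    intro a b hab
    exact congrFun hab ⟨0, hK⟩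
  have hunc1 : ¬ Countable (Fin K → ℝ) := by
    intro hc
    haveI := hc
    haveI : Countable ℝ := hinj.countable
    exact ((uncountable_iff_not_countable ℝ).1 (inferInstance : Uncountable ℝ)) this
  have hunc2 : ¬ Countable ℝ :=
    (uncountable_iff_not_countable ℝ).1 (inferInstance : Uncountable ℝ)
  let e : (Fin K → ℝ) ≃ᵐ ℝ := PolishSpace.measurableEquivOfNotCountable hunc1 hunc2
  haveI : IsProbabilityMeasure (Measure.map e μ) :=
    Measure.isProbabilityMeasure_map e.measurable.aemeasurable
  obtain ⟨q, hq, hmap⟩ := exists_transport (Measure.map e μ)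
  refine ⟨fun t => e.symm (q t), e.symm.measurable.comp hq, ?_⟩
  have : (fun t => e.symm (q t)) = e.symm ∘ q := rfl
  rw [this, ← Measure.map_map e.symm.measurable hq, hmap,
    e.map_symm_map]

end ReLUAux

open scoped ENNReal
open ReLUAux Set

/-- With `p_z` the uniform probability measure on the cube `[0,1]^K`: for every `ε > 0`, `δ ∈ (0,1)`,
`B > 0` and Borel probability measure `μ` on `ℝ^K` supported on the sup-norm ball of radius `B`,
there are a transport map `H` from `p_z` to `μ` and a ReLU network `N : ℝ^{1+K} → ℝ` such that
with `p_z`-probability at least `1 - δ` over `z`, `max_i |N(x_i, z) - H(z)_i| ≤ ε`. -/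
theorem relu_linear_hypermodel_universal_uniform
    (K : ℕ) (hK : 1 ≤ K) (x : Fin K → ℝ) (hx : Function.Injective x)
    (ε δ B : ℝ) (hε : 0 < ε) (hδ : δ ∈ Set.Ioo (0 : ℝ) 1) (hB : 0 < B)
    (μ : Measure (Fin K → ℝ)) [IsProbabilityMeasure μ]
    (hμ : μ {v | ∀ i, |v i| ≤ B} = 1) :
    ∃ (H : (Fin K → ℝ) → (Fin K → ℝ)) (N : (Fin (K + 1) → ℝ) → (Fin 1 → ℝ)),
      Measurable H ∧
      Measure.map H (Measure.pi fun _ : Fin K => volume.restrict (Set.Icc (0 : ℝ) 1)) = μ ∧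
      IsReLUNet N ∧
      ENNReal.ofReal (1 - δ) ≤
        (Measure.pi fun _ : Fin K => volume.restrict (Set.Icc (0 : ℝ) 1))
          {z | ∀ i, |N (Fin.cons (x i) z) 0 - H z i| ≤ ε} := by
  classical
  set lam : Measure ℝ := volume.restrict (Set.Icc (0:ℝ) 1) with hlam
  set pz : Measure (Fin K → ℝ) := Measure.pi fun _ : Fin K => lam with hpz
  set i0 : Fin K := ⟨0, hK⟩ with hi0
  obtain ⟨h, hhmeas, hhmap⟩ := exists_transport_pi K hK μ
  -- the transport map
  set H : (Fin K → ℝ) → (Fin K → ℝ) := fun z => h (z i0) with hH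
  have hHmeas : Measurable H := hhmeas.comp (measurable_pi_apply i0)
  have hHmap : Measure.map H pz = μ := by
    rw [hH, show (fun z : Fin K → ℝ => h (z i0)) = h ∘ (fun z : Fin K → ℝ => z i0) from rfl,
      ← Measure.map_map hhmeas (measurable_pi_apply i0), hpz, hlam, map_eval_pi K i0, hhmap]
  -- a.e. bound on h
  have hSmeas : MeasurableSet {v : Fin K → ℝ | ∀ i, |v i| ≤ B} := by
    have : {v : Fin K → ℝ | ∀ i, |v i| ≤ B} = ⋂ i, {v | |v i| ≤ B} := by
      ext v; simp
    rw [this]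
    exact MeasurableSet.iInter fun i =>
      measurableSet_le (Measurable.abs (measurable_pi_apply i)) measurable_const
  have hBae : ∀ᵐ t ∂lam, ∀ i, |h t i| ≤ B := by
    have h1 : lam (h ⁻¹' {v : Fin K → ℝ | ∀ i, |v i| ≤ B}) = 1 := by
      rw [← Measure.map_apply hhmeas hSmeas, hhmap, hμ]
    have h2 : lam (h ⁻¹' {v : Fin K → ℝ | ∀ i, |v i| ≤ B})ᶜ = 0 := by
      rw [measure_compl (hhmeas hSmeas) (measure_ne_top _ _), h1, measure_univ, tsub_self]
    rw [MeasureTheory.ae_iff]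
    rw [show {a | ¬ ∀ i : Fin K, |h a i| ≤ B}
        = (h ⁻¹' {v : Fin K → ℝ | ∀ i, |v i| ≤ B})ᶜ from by ext t; simp]
    exact h2
  -- integrability of the coordinates
  set fI : Fin K → ℝ → ℝ := fun i => (Set.Icc (0:ℝ) 1).indicator (fun t => h t i) with hfI
  have hint : ∀ i, Integrable (fI i) volume := by
    intro i
    rw [hfI]
    rw [integrable_indicator_iff measurableSet_Icc]
    apply Measure.integrableOn_of_bounded (M := B)
    · rw [Real.volume_Icc]; exact ENNReal.ofReal_ne_top
    · exact ((measurable_pi_apply i).comp hhmeas).aestronglyMeasurable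
    · filter_upwards [hBae] with t ht
      rw [Real.norm_eq_abs]
      exact ht i
  have hKpos : (0:ℝ) < K := by exact_mod_cast hK
  set η : ℝ≥0∞ := ENNReal.ofReal (ε/2 * (δ/(2*K))) with hη
  have hηpos : η ≠ 0 := by
    rw [hη]
    simp only [ne_eq, ENNReal.ofReal_eq_zero, not_le]
    have : 0 < δ / (2*K) := div_pos hδ.1 (by positivity)
    positivity
  have hex : ∀ i : Fin K, ∃ g : ℝ → ℝ, HasCompactSupport g ∧
      eLpNorm (fI i - g) 1 volume ≤ η ∧ Continuous g ∧ MemLp g 1 volume :=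
    fun i => (memLp_one_iff_integrable.2 (hint i)).exists_hasCompactSupport_eLpNorm_sub_le
      ENNReal.one_ne_top hηpos
  choose c hc_supp hc_lp hc_cont hc_mem using hex
  -- uniform continuity and mesh size
  have hUC : ∀ i, UniformContinuous (c i) :=
    fun i => (hc_supp i).uniformContinuous_of_continuous (hc_cont i)
  have hδsx : ∀ i : Fin K, ∃ d0 > 0, ∀ a b : ℝ, dist a b < d0 → dist (c i a) (c i b) < ε/2 :=
    fun i => Metric.uniformContinuous_iff.1 (hUC i) (ε/2) (half_pos hε)
  choose δs hδs_pos hδs_mod using hδsx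
  haveI : Nonempty (Fin K) := ⟨i0⟩
  set δ₀ : ℝ := Finset.univ.inf' Finset.univ_nonempty δs with hδ₀
  have hδ₀pos : 0 < δ₀ := by
    rw [hδ₀, Finset.lt_inf'_iff]
    exact fun i _ => hδs_pos i
  obtain ⟨n', hn'⟩ := exists_nat_one_div_lt hδ₀pos
  set nn : ℕ := n' + 1 with hnn_def
  have hnn : 1 ≤ nn := Nat.le_add_left 1 n'
  have hmesh : 1/(nn:ℝ) < δ₀ := by
    rw [hnn_def]
    push_cast
    exact hn'
  -- the network data
  set cval : Fin K → Fin (nn+1) → ℝ := fun i j => c i (grid nn j) with hcval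
  set M : ℝ := 1 + ∑ i : Fin K, ∑ j, |cval i j| with hM
  have hMb : ∀ (i : Fin K) (t : ℝ), |pwl nn (cval i) t| ≤ M - 1 := by
    intro i t
    refine (pwl_bound nn (cval i) t).trans ?_
    rw [hM, add_sub_cancel_left]
    exact Finset.single_le_sum (f := fun i => ∑ j, |cval i j|)
      (fun i _ => Finset.sum_nonneg fun j _ => abs_nonneg _) (Finset.mem_univ i)
  have hsepx : ∃ d > 0, ∀ i k : Fin K, i ≠ k → d ≤ |x i - x k| := by
    by_cases hPne : ((Finset.univ ×ˢ Finset.univ).filter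
        (fun p : Fin K × Fin K => p.1 ≠ p.2)).Nonempty
    · refine ⟨((Finset.univ ×ˢ Finset.univ).filter
        (fun p : Fin K × Fin K => p.1 ≠ p.2)).inf' hPne (fun p => |x p.1 - x p.2|), ?_, ?_⟩
      · rw [gt_iff_lt, Finset.lt_inf'_iff]
        rintro ⟨i, k⟩ hp
        rw [Finset.mem_filter] at hp
        exact abs_sub_pos.2 (fun hcontra => hp.2 (hx hcontra))
      · intro i k hik
        refine Finset.inf'_le (b := (i,k)) (fun p : Fin K × Fin K => |x p.1 - x p.2|) ?_
        exact Finset.mem_filter.2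
          ⟨Finset.mem_product.2 ⟨Finset.mem_univ _, Finset.mem_univ _⟩, hik⟩
    · exact ⟨1, one_pos, fun i k hik => absurd ⟨(i,k), Finset.mem_filter.2
        ⟨Finset.mem_product.2 ⟨Finset.mem_univ _, Finset.mem_univ _⟩, hik⟩⟩ hPne⟩
  obtain ⟨d, hd, hsep⟩ := hsepx
  refine ⟨H, net K nn x d M cval i0, hHmeas, hHmap, isReLUNet_net K nn x d M cval i0, ?_⟩
  -- bad sets and Markov
  set Bad : Fin K → Set ℝ := fun i => {t | ε/2 < |h t i - c i t|} with hBad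
  have hBadMeas : ∀ i, MeasurableSet (Bad i) := by
    intro i
    exact measurableSet_lt measurable_const
      (Measurable.abs (((measurable_pi_apply i).comp hhmeas).sub (hc_cont i).measurable))
  have hBadBound : ∀ i, lam (Bad i) ≤ ENNReal.ofReal (δ/(2*K)) := by
    intro i
    have hlint : ∫⁻ t, ↑‖h t i - c i t‖₊ ∂lam ≤ η := by
      calc ∫⁻ t, ↑‖h t i - c i t‖₊ ∂lam = ∫⁻ t, ↑‖(fI i - c i) t‖₊ ∂lam := by
            apply lintegral_congr_ae
            filter_upwards [ae_restrict_mem measurableSet_Icc] with t ht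
            rw [Pi.sub_apply, hfI]
            simp only
            rw [Set.indicator_of_mem ht]
      _ = eLpNorm (fI i - c i) 1 lam := by rw [eLpNorm_one_eq_lintegral_enorm]; rfl
      _ ≤ eLpNorm (fI i - c i) 1 volume := eLpNorm_mono_measure _ Measure.restrict_le_self
      _ ≤ η := hc_lp i
    have hsub : Bad i ⊆ {t | ENNReal.ofReal (ε/2) ≤ ↑‖h t i - c i t‖₊} := by
      intro t ht
      rw [Set.mem_setOf_eq, ← enorm_eq_nnnorm, ← ofReal_norm, Real.norm_eq_abs]
      exact ENNReal.ofReal_le_ofReal ht.le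
    have hmarkov := meas_ge_le_lintegral_div (μ := lam)
      (f := fun t => (↑‖h t i - c i t‖₊ : ℝ≥0∞))
      ((Measurable.abs (((measurable_pi_apply i).comp hhmeas).sub
        (hc_cont i).measurable)).ennreal_ofReal.aemeasurable.congr ?_)
      (ε := ENNReal.ofReal (ε/2))
      (by simp [ENNReal.ofReal_eq_zero, not_le, half_pos hε])
      ENNReal.ofReal_ne_top
    · calc lam (Bad i) ≤ lam {t | ENNReal.ofReal (ε/2) ≤ ↑‖h t i - c i t‖₊} :=
            measure_mono hsub
      _ ≤ (∫⁻ t, ↑‖h t i - c i t‖₊ ∂lam) / ENNReal.ofReal (ε/2) := hmarkov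
      _ ≤ η / ENNReal.ofReal (ε/2) := by
            exact ENNReal.div_le_div_right hlint _
      _ = ENNReal.ofReal (δ/(2*K)) := by
            rw [hη, ENNReal.ofReal_mul (le_of_lt (half_pos hε)), mul_comm,
              mul_div_assoc, ENNReal.div_self
                (by simp [ENNReal.ofReal_eq_zero, not_le, half_pos hε])
                ENNReal.ofReal_ne_top, mul_one]
    · refine Filter.Eventually.of_forall fun t => ?_
      simp only [Function.comp_apply]
      rw [← enorm_eq_nnnorm, ← ofReal_norm, Real.norm_eq_abs]
      rfl
  -- the good set
  set G : Set ℝ := ⋂ i, (Bad i)ᶜ with hG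
  have hGmeas : MeasurableSet G := MeasurableSet.iInter fun i => (hBadMeas i).compl
  have hGbound : ENNReal.ofReal (1 - δ) ≤ lam G := by
    have hUnion : lam (⋃ i, Bad i) ≤ ENNReal.ofReal δ := by
      calc lam (⋃ i, Bad i) ≤ ∑' i : Fin K, lam (Bad i) := measure_iUnion_le _
      _ = ∑ i : Fin K, lam (Bad i) := tsum_fintype _
      _ ≤ ∑ _i : Fin K, ENNReal.ofReal (δ/(2*K)) :=
            Finset.sum_le_sum fun i _ => hBadBound i
      _ = (K : ℝ≥0∞) * ENNReal.ofReal (δ/(2*K)) := by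
            rw [Finset.sum_const, Finset.card_univ, Fintype.card_fin, nsmul_eq_mul]
      _ = ENNReal.ofReal (K * (δ/(2*K))) := by
            rw [← ENNReal.ofReal_natCast K, ← ENNReal.ofReal_mul (by positivity)]
      _ = ENNReal.ofReal (δ/2) := by
            congr 1
            field_simp
      _ ≤ ENNReal.ofReal δ := ENNReal.ofReal_le_ofReal (by linarith [hδ.1])
    have hGeq : lam G = 1 - lam (⋃ i, Bad i) := by
      rw [hG, ← Set.compl_iUnion]
      exact prob_compl_eq_one_sub (MeasurableSet.iUnion fun i => hBadMeas i)
    rw [hGeq]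
    calc ENNReal.ofReal (1 - δ) ≤ 1 - ENNReal.ofReal δ := by
          apply ENNReal.le_sub_of_add_le_right ENNReal.ofReal_ne_top
          rw [← ENNReal.ofReal_add (by linarith [hδ.2]) (le_of_lt hδ.1)]
          rw [sub_add_cancel]
          simp
    _ ≤ 1 - lam (⋃ i, Bad i) := tsub_le_tsub_left hUnion 1
  -- the inclusion
  have hsubT : (fun z : Fin K → ℝ => z i0) ⁻¹' (G ∩ Set.Icc 0 1) ⊆
      {z | ∀ i, |net K nn x d M cval i0 (Fin.cons (x i) z) 0 - H z i| ≤ ε} := by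
    intro z hz
    obtain ⟨hzG, hzI⟩ := hz
    intro i
    rw [net_at_node K nn x d M cval i0 hd hsep hMb i z]
    rw [hH]
    simp only
    set t := z i0 with ht
    have h1 : |pwl nn (cval i) t - c i t| ≤ ε/2 := by
      refine pwl_approx hnn (cval i) (le_of_lt (half_pos hε)) hzI ?_
      intro j hj
      rw [hcval]
      simp only
      have hdist : dist (grid nn j) t < δs i := by
        rw [Real.dist_eq, abs_sub_comm]
        calc |t - grid nn j| ≤ 1/(nn:ℝ) := hj
        _ < δ₀ := hmesh
        _ ≤ δs i := Finset.inf'_le _ (Finset.mem_univ i)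
      exact (by rw [Real.dist_eq] at *; exact (hδs_mod i _ _ hdist).le :
        |c i (grid nn j) - c i t| ≤ ε/2)
    have h2 : |c i t - h t i| ≤ ε/2 := by
      have := Set.mem_iInter.1 hzG i
      rw [Set.mem_compl_iff, hBad, Set.mem_setOf_eq, not_lt] at this
      rw [abs_sub_comm]
      exact this
    calc |pwl nn (cval i) t - h t i|
        = |(pwl nn (cval i) t - c i t) + (c i t - h t i)| := by ring_nf
    _ ≤ |pwl nn (cval i) t - c i t| + |c i t - h t i| := abs_add_le _ _
    _ ≤ ε/2 + ε/2 := add_le_add h1 h2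
    _ = ε := add_halves ε
  -- final chain
  have hIccNull : lam (Set.Icc (0:ℝ) 1)ᶜ = 0 := by
    rw [hlam, Measure.restrict_apply measurableSet_Icc.compl, Set.compl_inter_self,
      measure_empty]
  calc ENNReal.ofReal (1 - δ) ≤ lam G := hGbound
  _ = lam (G ∩ Set.Icc 0 1) := (measure_inter_conull hIccNull).symm
  _ = pz ((fun z : Fin K → ℝ => z i0) ⁻¹' (G ∩ Set.Icc 0 1)) := by
      rw [hpz, ← Measure.map_apply (measurable_pi_apply i0)
        (hGmeas.inter measurableSet_Icc)]
      rw [show Measure.map (fun z : Fin K → ℝ => z i0)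
          (Measure.pi fun _ : Fin K => lam) = lam from map_eval_pi K i0]
  _ ≤ pz {z | ∀ i, |net K nn x d M cval i0 (Fin.cons (x i) z) 0 - H z i| ≤ ε} :=
      measure_mono hsubT
end

section
/- Let X be a finite nonempty set, let r : X → ℝ satisfy r(x) ≥ 0 for all x, and let v : X → ℝ satisfy v(x) > 0 for all x. Consider the function Ψ(π) = (∑_{x ∈ X} π_x r(x))² / (∑_{x ∈ X} π_x v(x)) defined on the simplex Δ_X = {π : X → ℝ : π_x ≥ 0 for all x, ∑_x π_x = 1}. Then there exists π* ∈ Δ_X attaining the minimum of Ψ over Δ_X such that π* has at most two nonzero components. -/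
open Finset

private lemma quad_coeff_zero {c₁ c₂ ε : ℝ} (hε : 0 < ε)
    (h : ∀ t : ℝ, |t| ≤ ε → 0 ≤ c₁ * t + c₂ * t ^ 2) : c₁ = 0 := by
  have key : ∀ t : ℝ, 0 < t → t ≤ ε → |c₁| ≤ c₂ * t := by
    intro t ht htε
    have h1 := h t (by rw [abs_of_pos ht]; exact htε)
    have h2 := h (-t) (by rw [abs_neg, abs_of_pos ht]; exact htε)
    rw [abs_le]
    constructor
    · nlinarith
    · nlinarith
  rcases le_or_gt c₂ 0 with hc | hc
  · have h1 := key ε hε le_rfl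
    have h2 : c₂ * ε ≤ 0 := mul_nonpos_of_nonpos_of_nonneg hc hε.le
    exact abs_nonpos_iff.mp (h1.trans h2)
  · by_contra hne
    have habs : 0 < |c₁| := abs_pos.mpr hne
    have htpos : 0 < min ε (|c₁| / (2 * c₂)) := lt_min hε (by positivity)
    have h1 := key _ htpos (min_le_left _ _)
    have h2 : c₂ * min ε (|c₁| / (2 * c₂)) ≤ c₂ * (|c₁| / (2 * c₂)) :=
      mul_le_mul_of_nonneg_left (min_le_right _ _) hc.le
    have h3 : c₂ * (|c₁| / (2 * c₂)) = |c₁| / 2 := by field_simp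
    nlinarith

private lemma denom_pos' {X : Type*} [Fintype X] (v : X → ℝ) (hv : ∀ x, 0 < v x)
    {π : X → ℝ} (hπ : π ∈ stdSimplex ℝ X) : 0 < ∑ x, π x * v x := by
  obtain ⟨x₀, hx₀⟩ : ∃ x, π x ≠ 0 := by
    by_contra hall
    push_neg at hall
    have := hπ.2
    simp [hall] at this
  have hx₀' : 0 < π x₀ := (hπ.1 x₀).lt_of_ne (Ne.symm hx₀)
  calc (0:ℝ) < π x₀ * v x₀ := mul_pos hx₀' (hv x₀)
    _ ≤ ∑ x, π x * v x :=
      Finset.single_le_sum (fun x _ => mul_nonneg (hπ.1 x) (hv x).le) (mem_univ x₀)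

private lemma sum_two_point {X : Type*} [Fintype X] [DecidableEq X] (p q : X) (α β : ℝ)
    (f : X → ℝ) :
    ∑ z, ((if z = p then α else 0) + (if z = q then β else 0)) * f z = α * f p + β * f q := by
  simp [add_mul, ite_mul, Finset.sum_add_distrib, Finset.sum_ite_eq']

private lemma sum_pert {X : Type*} [Fintype X] [DecidableEq X] (x y : X)
    (π f : X → ℝ) (t : ℝ) :
    ∑ z, (π z + (if z = x then t else 0) - (if z = y then t else 0)) * f z
      = (∑ z, π z * f z) + t * (f x - f y) := by
  simp only [sub_mul, add_mul, ite_mul, zero_mul, Finset.sum_sub_distrib,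
    Finset.sum_add_distrib, Finset.sum_ite_eq', mem_univ, if_pos]
  ring

/-- The variance-IDS information ratio `π ↦ (∑_x π_x r_x)² / (∑_x π_x v_x)` (with `r ≥ 0`
and `v > 0`) attains its minimum over the simplex at a distribution with at most two nonzero
components. -/
theorem ids_min_attained_two_support {X : Type*} [Fintype X] [Nonempty X]
    (r v : X → ℝ) (hr : ∀ x, 0 ≤ r x) (hv : ∀ x, 0 < v x) :
    ∃ π₀ ∈ stdSimplex ℝ X,
      (∀ π ∈ stdSimplex ℝ X,
        (∑ x, π₀ x * r x) ^ 2 / (∑ x, π₀ x * v x)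
          ≤ (∑ x, π x * r x) ^ 2 / (∑ x, π x * v x)) ∧
      Set.ncard {x | π₀ x ≠ 0} ≤ 2 := by
  classical
  set Ψ : (X → ℝ) → ℝ := fun π => (∑ x, π x * r x) ^ 2 / (∑ x, π x * v x) with hΨdef
  -- existence of a minimizer
  have hcontN : Continuous fun π : X → ℝ => ∑ x, π x * r x :=
    continuous_finset_sum _ fun x _ => (continuous_apply x).mul continuous_const
  have hcontD : Continuous fun π : X → ℝ => ∑ x, π x * v x :=
    continuous_finset_sum _ fun x _ => (continuous_apply x).mul continuous_const
  have hcont : ContinuousOn Ψ (stdSimplex ℝ X) := by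
    apply ContinuousOn.div
    · exact (hcontN.pow 2).continuousOn
    · exact hcontD.continuousOn
    · intro σ hσ; exact (denom_pos' v hv hσ).ne'
  have hne : (stdSimplex ℝ X).Nonempty := by
    refine ⟨fun z => if z = Classical.arbitrary X then 1 else 0, fun z => ?_, ?_⟩
    · show (0:ℝ) ≤ if z = Classical.arbitrary X then 1 else 0
      split <;> norm_num
    · simp
  obtain ⟨π, hπ, hmin⟩ := (isCompact_stdSimplex ℝ X).exists_isMinOn hne hcont
  have hmin' : ∀ σ ∈ stdSimplex ℝ X, Ψ π ≤ Ψ σ := fun σ hσ => hmin hσ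
  obtain ⟨N, hN⟩ : ∃ N : ℝ, N = ∑ x, π x * r x := ⟨_, rfl⟩
  obtain ⟨D, hD⟩ : ∃ D : ℝ, D = ∑ x, π x * v x := ⟨_, rfl⟩
  have hDpos : 0 < D := by rw [hD]; exact denom_pos' v hv hπ
  obtain ⟨x₀, hx₀⟩ : ∃ x, π x ≠ 0 := by
    by_contra hall
    push_neg at hall
    have := hπ.2
    simp [hall] at this
  by_cases hN0 : N = 0
  · -- minimum value is 0, use a point mass on an action with r = 0
    have hterm : ∀ x ∈ univ, π x * r x = 0 := by
      rw [← Finset.sum_eq_zero_iff_of_nonneg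
        (fun x _ => mul_nonneg (hπ.1 x) (hr x)), ← hN]
      exact hN0
    have hr0 : r x₀ = 0 := by
      have := hterm x₀ (mem_univ x₀)
      rcases mul_eq_zero.mp this with h | h
      · exact absurd h hx₀
      · exact h
    refine ⟨fun z => (if z = x₀ then 1 else 0) + (if z = x₀ then 0 else 0), ⟨fun z => ?_, ?_⟩,
      ?_, ?_⟩
    · show (0:ℝ) ≤ (if z = x₀ then 1 else 0) + (if z = x₀ then 0 else 0)
      split <;> norm_num
    · simp
    · intro σ hσ
      rw [sum_two_point, sum_two_point, hr0]
      have h1 : (0:ℝ) ≤ (∑ x, σ x * r x) ^ 2 / (∑ x, σ x * v x) :=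
        div_nonneg (sq_nonneg _) (denom_pos' v hv hσ).le
      simpa using h1
    · have hsub : {z | ((if z = x₀ then (1:ℝ) else 0) + (if z = x₀ then 0 else 0)) ≠ 0}
          ⊆ {x₀} := by
        intro z hz
        simp only [Set.mem_setOf_eq] at hz
        by_contra hzne
        simp only [Set.mem_singleton_iff] at hzne
        simp [hzne] at hz
      calc Set.ncard {z | ((if z = x₀ then (1:ℝ) else 0) + (if z = x₀ then 0 else 0)) ≠ 0}
          ≤ Set.ncard {x₀} := Set.ncard_le_ncard hsub (Set.toFinite _)
        _ ≤ 2 := by rw [Set.ncard_singleton]; norm_num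
  · have hNnn : 0 ≤ N := by
      rw [hN]; exact Finset.sum_nonneg fun x _ => mul_nonneg (hπ.1 x) (hr x)
    have hNpos : 0 < N := hNnn.lt_of_ne (Ne.symm hN0)
    -- first-order condition for pairs in the support
    have pair : ∀ x, π x ≠ 0 → ∀ y, π y ≠ 0 →
        2 * D * (r x - r y) = N * (v x - v y) := by
      intro x hx y hy
      by_cases hxy : x = y
      · subst hxy; ring
      · have hπx : 0 < π x := (hπ.1 x).lt_of_ne (Ne.symm hx)
        have hπy : 0 < π y := (hπ.1 y).lt_of_ne (Ne.symm hy)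
        set ε := min (π x) (π y) with hε
        have hεpos : 0 < ε := lt_min hπx hπy
        have hcond : ∀ t : ℝ, |t| ≤ ε →
            0 ≤ (2 * N * D * (r x - r y) - N ^ 2 * (v x - v y)) * t
              + (D * (r x - r y) ^ 2) * t ^ 2 := by
          intro t ht
          rw [abs_le] at ht
          set π' : X → ℝ :=
            fun z => π z + (if z = x then t else 0) - (if z = y then t else 0) with hπ'def
          have hπ' : π' ∈ stdSimplex ℝ X := by
            constructor
            · intro z
              have hεx : ε ≤ π x := min_le_left _ _
              have hεy : ε ≤ π y := min_le_right _ _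
              have hz0 := hπ.1 z
              have ht1 := ht.1
              have ht2 := ht.2
              show 0 ≤ (π z + if z = x then t else 0) - if z = y then t else 0
              split_ifs with h1 h2 h3
              · linarith
              · subst h1; linarith
              · subst h3; linarith
              · linarith
            · have := sum_pert x y π (fun _ => (1:ℝ)) t
              calc ∑ z, π' z = ∑ z, π' z * 1 := by simp
                _ = (∑ z, π z * 1) + t * (1 - 1) := this
                _ = 1 := by simpa using hπ.2
          have hNs : ∑ z, π' z * r z = N + t * (r x - r y) := by
            rw [hN]; exact sum_pert x y π r t
          have hDs : ∑ z, π' z * v z = D + t * (v x - v y) := by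
            rw [hD]; exact sum_pert x y π v t
          have hD' : 0 < D + t * (v x - v y) := by
            have := denom_pos' v hv hπ'
            rwa [hDs] at this
          have hle := hmin' π' hπ'
          simp only [hΨdef] at hle
          rw [hNs, hDs, ← hN, ← hD, div_le_div_iff₀ hDpos hD'] at hle
          nlinarith [hle]
        have hc := quad_coeff_zero hεpos hcond
        have h2 : N * (2 * D * (r x - r y)) = N * (N * (v x - v y)) := by
          linear_combination hc
        exact mul_left_cancel₀ hN0 h2
    -- extremes of r on the support
    obtain ⟨p, hp, hpmin⟩ :=
      Finset.exists_min_image (univ.filter fun z => π z ≠ 0) r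
        ⟨x₀, by simp [hx₀]⟩
    obtain ⟨q, hq, hqmax⟩ :=
      Finset.exists_max_image (univ.filter fun z => π z ≠ 0) r
        ⟨x₀, by simp [hx₀]⟩
    rw [Finset.mem_filter] at hp hq
    have hpmin' : ∀ z, π z ≠ 0 → r p ≤ r z := fun z hz =>
      hpmin z (by simp [hz])
    have hqmax' : ∀ z, π z ≠ 0 → r z ≤ r q := fun z hz =>
      hqmax z (by simp [hz])
    -- all support points on a common line
    have key : ∀ z, π z ≠ 0 → N * v z = N * v q + 2 * D * (r z - r q) := by
      intro z hz
      have := pair z hz q hq.2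
      linarith [this]
    have hsum1 : ∑ z, π z = 1 := hπ.2
    -- N between r p and r q
    have hNle : N ≤ r q := by
      have h1 : ∀ z ∈ univ, π z * r z ≤ π z * r q := by
        intro z _
        by_cases hz : π z = 0
        · simp [hz]
        · exact mul_le_mul_of_nonneg_left (hqmax' z hz) (hπ.1 z)
      calc N = ∑ z, π z * r z := hN
        _ ≤ ∑ z, π z * r q := Finset.sum_le_sum h1
        _ = (∑ z, π z) * r q := by rw [Finset.sum_mul]
        _ = r q := by rw [hsum1, one_mul]
    have hNge : r p ≤ N := by
      have h1 : ∀ z ∈ univ, π z * r p ≤ π z * r z := by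
        intro z _
        by_cases hz : π z = 0
        · simp [hz]
        · exact mul_le_mul_of_nonneg_left (hpmin' z hz) (hπ.1 z)
      calc r p = (∑ z, π z) * r p := by rw [hsum1, one_mul]
        _ = ∑ z, π z * r p := by rw [Finset.sum_mul]
        _ ≤ ∑ z, π z * r z := Finset.sum_le_sum h1
        _ = N := hN.symm
    -- the mixing weight
    set α : ℝ := if r p = r q then 0 else (r q - N) / (r q - r p) with hαdef
    have hrpq : r p ≤ r q := hNge.trans hNle
    have hα0 : 0 ≤ α := by
      rw [hαdef]
      split
      · exact le_refl 0
      · rename_i hne'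
        have : r p < r q := lt_of_le_of_ne hrpq hne'
        exact div_nonneg (by linarith) (by linarith)
    have hα1 : α ≤ 1 := by
      rw [hαdef]
      split
      · norm_num
      · rename_i hne'
        have hlt : r p < r q := lt_of_le_of_ne hrpq hne'
        rw [div_le_one (by linarith)]
        linarith
    have hNα : α * r p + (1 - α) * r q = N := by
      rw [hαdef]
      split
      · rename_i heq
        have hNq : N = r q := le_antisymm hNle (by rw [← heq]; exact hNge)
        rw [hNq]; ring
      · rename_i hne'
        have hlt : r p < r q := lt_of_le_of_ne hrpq hne'
        have hd : r q - r p ≠ 0 := by linarith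
        field_simp
        ring
    -- global identity: N * D = N * v q + 2 * D * (N - r q)
    have hND : N * D = N * v q + 2 * D * (N - r q) := by
      have h1 : N * D = ∑ z, π z * (N * v z) := by
        rw [hD, Finset.mul_sum]
        exact Finset.sum_congr rfl fun z _ => by ring
      have h2 : ∀ z ∈ univ, π z * (N * v z) = π z * (N * v q + 2 * D * (r z - r q)) := by
        intro z _
        by_cases hz : π z = 0
        · simp [hz]
        · rw [key z hz]
      have h3 : ∑ z, π z * (N * v q + 2 * D * (r z - r q))
          = (N * v q - 2 * D * r q) * (∑ z, π z) + 2 * D * (∑ z, π z * r z) := by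
        rw [Finset.mul_sum, Finset.mul_sum, ← Finset.sum_add_distrib]
        exact Finset.sum_congr rfl fun z _ => by ring
      rw [h1, Finset.sum_congr rfl h2, h3, hsum1, ← hN]
      ring
    -- the two-point candidate
    set π₀ : X → ℝ := fun z => (if z = p then α else 0) + (if z = q then 1 - α else 0)
      with hπ₀def
    have hπ₀mem : π₀ ∈ stdSimplex ℝ X := by
      constructor
      · intro z
        have h1 : (0:ℝ) ≤ if z = p then α else 0 := by
          split
          · exact hα0
          · exact le_refl 0
        have h2 : (0:ℝ) ≤ if z = q then 1 - α else 0 := by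
          split
          · linarith
          · exact le_refl 0
        show 0 ≤ (if z = p then α else 0) + (if z = q then 1 - α else 0)
        linarith
      · have := sum_two_point p q α (1 - α) (fun _ => (1:ℝ))
        calc ∑ z, π₀ z = ∑ z, π₀ z * 1 := by simp
          _ = α * 1 + (1 - α) * 1 := this
          _ = 1 := by ring
    have hN₀ : ∑ z, π₀ z * r z = N := by
      simp only [hπ₀def]
      rw [sum_two_point]; exact hNα
    have hαpq : α * (r p - r q) = N - r q := by linarith [hNα]
    have hD₀ : ∑ z, π₀ z * v z = D := by
      simp only [hπ₀def]
      rw [sum_two_point]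
      have h1 : N * (α * v p + (1 - α) * v q) = N * D := by
        have hkp : N * v p = N * v q + 2 * D * (r p - r q) := key p hp.2
        calc N * (α * v p + (1 - α) * v q)
            = α * (N * v p) + (1 - α) * (N * v q) := by ring
          _ = N * v q + 2 * D * (α * (r p - r q)) := by rw [hkp]; ring
          _ = N * v q + 2 * D * (N - r q) := by rw [hαpq]
          _ = N * D := hND.symm
      exact mul_left_cancel₀ hN0 h1
    refine ⟨π₀, hπ₀mem, ?_, ?_⟩
    · intro σ hσ
      rw [hN₀, hD₀]
      have hle := hmin' σ hσ
      simp only [hΨdef] at hle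
      rw [← hN, ← hD] at hle
      exact hle
    · have hsub : {z | π₀ z ≠ 0} ⊆ {p, q} := by
        intro z hz
        simp only [Set.mem_setOf_eq, hπ₀def] at hz
        by_contra hzn
        simp only [Set.mem_insert_iff, Set.mem_singleton_iff, not_or] at hzn
        simp [hzn.1, hzn.2] at hz
      calc Set.ncard {z | π₀ z ≠ 0} ≤ Set.ncard ({p, q} : Set X) :=
          Set.ncard_le_ncard hsub (Set.toFinite _)
        _ ≤ Set.ncard ({q} : Set X) + 1 := Set.ncard_insert_le p {q}
        _ ≤ 2 := by rw [Set.ncard_singleton]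
end
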